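/- For positive integers k, ℓ, m, h with ℓ ≤ k and a forest F with m components of sizes f_1,...,f_m summing to ℓ: the weighted sum Σ_{h=1}^{k-ℓ+m} f(k,h,{f_1,...,f_m}) * t^h, where f(k,h,{f_1,...,f_m}) = f_1...f_m Σ_{k_0=0}^{k-ℓ} C(k-ℓ,k_0) ℓ^(k-ℓ-k_0) C(k_0+m-1,h-1) (k-ℓ)^(k_0+m-h), equals f_1...f_m * (k + t)^(k-ℓ) * (k-ℓ+t)^(m-1) * t for any real t > 0. -/

import Mathlib

open Finset

lemma inner_sum_aux (K N : ℕ) (hKN : K ≤ N) (x t : ℝ) :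
    ∑ h ∈ Icc 1 (N + 1), (K.choose (h - 1) : ℝ) * x ^ (K + 1 - h) * t ^ h
      = t * (t + x) ^ K := by
  have hIcc : Icc 1 (N + 1) = Ico 1 (N + 2) := by
    rw [← Finset.Ico_add_one_right_eq_Icc]; rfl
  rw [hIcc, Finset.sum_Ico_eq_sum_range]
  have hrange : N + 2 - 1 = N + 1 := by omega
  rw [hrange]
  rw [← Finset.sum_subset (Finset.range_subset_range.2 (by omega : K + 1 ≤ N + 1))]
  · rw [add_pow, Finset.mul_sum]
    apply Finset.sum_congr rfl
    intro i hi
    rw [Finset.mem_range] at hi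
    have h1 : 1 + i - 1 = i := by omega
    have h2 : K + 1 - (1 + i) = K - i := by omega
    rw [h1, h2, pow_add, pow_one]
    ring
  · intro i _ hi
    rw [Finset.mem_range] at hi
    have h1 : 1 + i - 1 = i := by omega
    rw [h1, Nat.choose_eq_zero_of_lt (by omega)]
    simp

lemma key_sum (n m : ℕ) (hm : 1 ≤ m) (ℓ : ℕ) (t : ℝ) :
    ∑ h ∈ Icc 1 (n + m),
      (∑ k₀ ∈ range (n + 1), (n.choose k₀ : ℝ) * (ℓ : ℝ) ^ (n - k₀)
        * ((k₀ + m - 1).choose (h - 1) : ℝ) * (n : ℝ) ^ (k₀ + m - h)) * t ^ h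
    = ((t + n) + ℓ) ^ n * ((n : ℝ) + t) ^ (m - 1) * t := by
  have hnm : n + m = (n + m - 1) + 1 := by omega
  calc ∑ h ∈ Icc 1 (n + m),
      (∑ k₀ ∈ range (n + 1), (n.choose k₀ : ℝ) * (ℓ : ℝ) ^ (n - k₀)
        * ((k₀ + m - 1).choose (h - 1) : ℝ) * (n : ℝ) ^ (k₀ + m - h)) * t ^ h
      = ∑ k₀ ∈ range (n + 1), ∑ h ∈ Icc 1 (n + m),
          ((n.choose k₀ : ℝ) * (ℓ : ℝ) ^ (n - k₀)) *
            (((k₀ + m - 1).choose (h - 1) : ℝ) * (n : ℝ) ^ ((k₀ + m - 1) + 1 - h) * t ^ h) := by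
        rw [Finset.sum_comm]
        apply Finset.sum_congr rfl
        intro h _
        rw [Finset.sum_mul]
        apply Finset.sum_congr rfl
        intro k₀ _
        have : k₀ + m - 1 + 1 = k₀ + m := by omega
        rw [this]; ring
    _ = ∑ k₀ ∈ range (n + 1),
          ((n.choose k₀ : ℝ) * (ℓ : ℝ) ^ (n - k₀)) * (t * (t + n) ^ (k₀ + m - 1)) := by
        apply Finset.sum_congr rfl
        intro k₀ hk₀
        rw [Finset.mem_range] at hk₀
        rw [← Finset.mul_sum]
        congr 1
        rw [hnm]
        exact inner_sum_aux (k₀ + m - 1) (n + m - 1) (by omega) (n : ℝ) t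
    _ = ((t + n) + ℓ) ^ n * ((n : ℝ) + t) ^ (m - 1) * t := by
        rw [add_pow, Finset.sum_mul, Finset.sum_mul]
        apply Finset.sum_congr rfl
        intro k₀ _
        have : k₀ + m - 1 = k₀ + (m - 1) := by omega
        rw [this, pow_add]
        have hc : (n : ℝ) + t = t + n := by ring
        rw [hc]
        ring

theorem stmt_11 (k ℓ m : ℕ) (hk : 1 ≤ k) (hℓ : 1 ≤ ℓ) (hm : 1 ≤ m) (hℓk : ℓ ≤ k)
    (f : Fin m → ℕ) (hf : ∀ i, 1 ≤ f i) (hsum : ∑ i, f i = ℓ) (t : ℝ) (ht : 0 < t) :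
    ∑ h ∈ Finset.Icc 1 (k - ℓ + m),
      ((∏ i, (f i : ℝ)) * ∑ k₀ ∈ Finset.range (k - ℓ + 1),
        ((k - ℓ).choose k₀ : ℝ) * (ℓ : ℝ) ^ (k - ℓ - k₀)
          * ((k₀ + m - 1).choose (h - 1) : ℝ) * ((k - ℓ : ℕ) : ℝ) ^ (k₀ + m - h))
        * t ^ h
    = (∏ i, (f i : ℝ)) * ((k : ℝ) + t) ^ (k - ℓ) * (((k - ℓ : ℕ) : ℝ) + t) ^ (m - 1)
        * t := by
  have hkey := key_sum (k - ℓ) m hm ℓ t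
  have hkℝ : (t + ((k - ℓ : ℕ) : ℝ)) + (ℓ : ℝ) = (k : ℝ) + t := by
    have : ((k - ℓ : ℕ) : ℝ) = (k : ℝ) - (ℓ : ℝ) := by
      push_cast [Nat.cast_sub hℓk]; ring
    rw [this]; ring
  rw [hkℝ] at hkey
  calc ∑ h ∈ Finset.Icc 1 (k - ℓ + m),
      ((∏ i, (f i : ℝ)) * ∑ k₀ ∈ Finset.range (k - ℓ + 1),
        ((k - ℓ).choose k₀ : ℝ) * (ℓ : ℝ) ^ (k - ℓ - k₀)
          * ((k₀ + m - 1).choose (h - 1) : ℝ) * ((k - ℓ : ℕ) : ℝ) ^ (k₀ + m - h))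
        * t ^ h
      = (∏ i, (f i : ℝ)) * ∑ h ∈ Finset.Icc 1 (k - ℓ + m),
          (∑ k₀ ∈ Finset.range (k - ℓ + 1),
            ((k - ℓ).choose k₀ : ℝ) * (ℓ : ℝ) ^ (k - ℓ - k₀)
              * ((k₀ + m - 1).choose (h - 1) : ℝ) * ((k - ℓ : ℕ) : ℝ) ^ (k₀ + m - h))
            * t ^ h := by
        rw [Finset.mul_sum]
        apply Finset.sum_congr rfl
        intro h _
        ring
    _ = (∏ i, (f i : ℝ)) * ((k : ℝ) + t) ^ (k - ℓ) * (((k - ℓ : ℕ) : ℝ) + t) ^ (m - 1) * t := by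
        rw [hkey]; ring
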